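/- Let G be a graph, w : V → ℝ≥0 vertex weights, and τ ≥ 1. Suppose I_ALG is a maximal independent set of G such that every vertex v not in I_ALG has a neighbor v' ∈ I_ALG with w(v') ≥ w(v), and suppose every vertex of I_ALG has at most τ pairwise non-adjacent neighbors. Then for every independent set I of G, w(I) ≤ τ · w(I_ALG). -/
import Mathlib


theorem maximal_independent_set_charging_bound {V : Type*} [Fintype V] [DecidableEq V]
    (G : SimpleGraph V) (w : V → ℝ) (hw : ∀ v, 0 ≤ w v)
    (τ : ℕ) (hτ : 1 ≤ τ)
    (IALG : Finset V)
    (hind : ∀ u ∈ IALG, ∀ v ∈ IALG, ¬ G.Adj u v)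
    (hmax : ∀ v : V, v ∉ IALG → ∃ v' ∈ IALG, G.Adj v v')
    (hcharge : ∀ v : V, v ∉ IALG → ∃ v' ∈ IALG, G.Adj v v' ∧ w v ≤ w v')
    (hclaw : ∀ v ∈ IALG, ∀ S : Finset V,
      (∀ u ∈ S, G.Adj v u) →
      (∀ u ∈ S, ∀ u' ∈ S, u ≠ u' → ¬ G.Adj u u') →
      S.card ≤ τ) :
    ∀ I : Finset V, (∀ u ∈ I, ∀ v ∈ I, ¬ G.Adj u v) →
      ∑ v ∈ I, w v ≤ (τ : ℝ) * ∑ v ∈ IALG, w v := by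
  intro I hI
  classical
  set f : V → V := fun v => if h : v ∈ IALG then v else (hcharge v h).choose with hf
  have hfmem : ∀ v, f v ∈ IALG := by
    intro v
    by_cases h : v ∈ IALG
    · simp [hf, h]
    · simp only [hf, h, dif_neg, not_false_iff]
      exact (hcharge v h).choose_spec.1
  have hfw : ∀ v, w v ≤ w (f v) := by
    intro v
    by_cases h : v ∈ IALG
    · simp [hf, h]
    · simp only [hf, h, dif_neg, not_false_iff]
      exact (hcharge v h).choose_spec.2.2
  have hfadj : ∀ v, v ∉ IALG → G.Adj v (f v) := by
    intro v h
    simp only [hf, h, dif_neg, not_false_iff]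
    exact (hcharge v h).choose_spec.2.1
  have hfib : ∀ v', v' ∈ IALG → (I.filter (fun u => f u = v')).card ≤ τ := by
    intro v' hv'
    set T := I.filter (fun u => f u = v') with hT
    by_cases hvT : v' ∈ T
    · -- then T = {v'}
      have : T = {v'} := by
        apply Finset.eq_singleton_iff_unique_mem.mpr
        refine ⟨hvT, fun u hu => ?_⟩
        by_contra hne
        have huI : u ∈ I := (Finset.mem_filter.mp hu).1
        have hfu : f u = v' := (Finset.mem_filter.mp hu).2
        have huA : u ∉ IALG := by
          intro h
          apply hne
          simpa [hf, h] using hfu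
        have hadj : G.Adj u v' := hfu ▸ hfadj u huA
        exact hI u huI v' (Finset.mem_filter.mp hvT).1 hadj
      rw [this]
      simpa using hτ
    · apply hclaw v' hv' T
      · intro u hu
        have huI : u ∈ I := (Finset.mem_filter.mp hu).1
        have hfu : f u = v' := (Finset.mem_filter.mp hu).2
        have huA : u ∉ IALG := by
          intro h
          apply hvT
          have : u = v' := by simpa [hf, h] using hfu
          exact this ▸ hu
        exact ((hfu ▸ hfadj u huA) : G.Adj u v').symm
      · intro u hu u' hu' hne
        exact hI u (Finset.mem_filter.mp hu).1 u' (Finset.mem_filter.mp hu').1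
  calc ∑ v ∈ I, w v
      = ∑ v' ∈ IALG, ∑ v ∈ I.filter (fun u => f u = v'), w v := by
        rw [Finset.sum_fiberwise_of_maps_to (fun v _ => hfmem v)]
    _ ≤ ∑ v' ∈ IALG, (τ : ℝ) * w v' := by
        apply Finset.sum_le_sum
        intro v' hv'
        calc ∑ v ∈ I.filter (fun u => f u = v'), w v
            ≤ ∑ v ∈ I.filter (fun u => f u = v'), w v' := by
              apply Finset.sum_le_sum
              intro u hu
              have hfu : f u = v' := (Finset.mem_filter.mp hu).2
              exact hfu ▸ hfw u
          _ = (I.filter (fun u => f u = v')).card * w v' := by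
              rw [Finset.sum_const, nsmul_eq_mul]
          _ ≤ (τ : ℝ) * w v' := by
              apply mul_le_mul_of_nonneg_right _ (hw v')
              exact_mod_cast hfib v' hv'
    _ = (τ : ℝ) * ∑ v ∈ IALG, w v := by rw [Finset.mul_sum]
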